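/- arXiv:2012.12929 — 2 statements merged into one kernel-verified Lean document; each statement's English description precedes it below -/
import Mathlib

section
/- Let L ⊂ ℝ^n and A ⊂ ℝ^m be bimodular lattices and let U_A = (L × A) ∪ ((L' \ L) × (A' \ A)) ⊂ ℝ^{n+m} be the associated unimodular overlattice of L ⊕ A. Then the restriction map Char(U_A) → Char(L) is surjective: for every characteristic covector η of L there exists a characteristic covector ξ of U_A whose component in ℝ^n equals η. The same holds for the restriction map Char(U_A) → Char(A). -/
open scoped RealInnerProductSpace

noncomputable section

/-- The dual of a subset of Euclidean space: vectors pairing integrally with everything. -/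
def dualSet {n : ℕ} (Λ : Set (EuclideanSpace ℝ (Fin n))) : Set (EuclideanSpace ℝ (Fin n)) :=
  {x | ∀ v ∈ Λ, ∃ k : ℤ, ⟪x, v⟫ = (k : ℝ)}

/-- A (positive definite integral) lattice of full rank `n` in `ℝ^n`: an additive subgroup,
free abelian of rank `n` (it has a `ℤ`-basis indexed by `Fin n`), spanning `ℝ^n` over `ℝ`,
with all pairwise inner products integral. -/
def IsLattice {n : ℕ} (Λ : Set (EuclideanSpace ℝ (Fin n))) : Prop :=
  (0 ∈ Λ ∧ (∀ x ∈ Λ, ∀ y ∈ Λ, x + y ∈ Λ) ∧ (∀ x ∈ Λ, -x ∈ Λ)) ∧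
  (∃ b : Fin n → EuclideanSpace ℝ (Fin n),
      (∀ i, b i ∈ Λ) ∧ LinearIndependent ℤ b ∧
      ∀ x ∈ Λ, ∃ c : Fin n → ℤ, x = ∑ i, (c i : ℝ) • b i) ∧
  Submodule.span ℝ Λ = ⊤ ∧
  ∀ v ∈ Λ, ∀ w ∈ Λ, ∃ k : ℤ, ⟪v, w⟫ = (k : ℝ)

/-- A unimodular lattice: a lattice equal to its own dual. -/
def IsUnimodular {n : ℕ} (Λ : Set (EuclideanSpace ℝ (Fin n))) : Prop :=
  IsLattice Λ ∧ dualSet Λ = Λ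

/-- A bimodular lattice: a lattice of index 2 in its dual. -/
def IsBimodular {n : ℕ} (Λ : Set (EuclideanSpace ℝ (Fin n))) : Prop :=
  IsLattice Λ ∧
  ∃ w ∈ dualSet Λ \ Λ, ∀ x ∈ dualSet Λ, x ∈ Λ ∨ x - w ∈ Λ

/-- Characteristic covectors: elements `ξ` of the dual with `ξ·v ≡ v·v (mod 2)` for all `v ∈ Λ`. -/
def CharSet {n : ℕ} (Λ : Set (EuclideanSpace ℝ (Fin n))) : Set (EuclideanSpace ℝ (Fin n)) :=
  {ξ | ξ ∈ dualSet Λ ∧ ∀ v ∈ Λ, ∃ k : ℤ, ⟪ξ, v⟫ - ⟪v, v⟫ = 2 * (k : ℝ)}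

/-- `CharSign Λ ε` (for `ε = ±1`): characteristic covectors with `ξ·ξ ≡ n + ε (mod 8)`. -/
def CharSign {n : ℕ} (Λ : Set (EuclideanSpace ℝ (Fin n))) (ε : ℤ) :
    Set (EuclideanSpace ℝ (Fin n)) :=
  {ξ | ξ ∈ CharSet Λ ∧ ∃ k : ℤ, ⟪ξ, ξ⟫ = (n : ℝ) + (ε : ℝ) + 8 * (k : ℝ)}

/-- The defect `d(Λ) = min_{ξ ∈ Char(Λ)} (ξ·ξ − n)/4` of a full-rank lattice in `ℝ^n`. -/
def defect {n : ℕ} (Λ : Set (EuclideanSpace ℝ (Fin n))) : ℝ :=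
  sInf ((fun ξ => (⟪ξ, ξ⟫ - (n : ℝ)) / 4) '' CharSet Λ)

/-- The two defects `d_±(L) = min_{ξ ∈ Char_±(L)} (ξ·ξ − n)/4` of a bimodular lattice. -/
def defectSign {n : ℕ} (Λ : Set (EuclideanSpace ℝ (Fin n))) (ε : ℤ) : ℝ :=
  sInf ((fun ξ => (⟪ξ, ξ⟫ - (n : ℝ)) / 4) '' CharSign Λ ε)

/-- The juxtaposition `(x, y) ∈ ℝ^n × ℝ^m = ℝ^{n+m}`. -/
def pairE {n m : ℕ} (x : EuclideanSpace ℝ (Fin n)) (y : EuclideanSpace ℝ (Fin m)) :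
    EuclideanSpace ℝ (Fin (n + m)) :=
  (EuclideanSpace.equiv (Fin (n + m)) ℝ).symm
    (Fin.append (EuclideanSpace.equiv (Fin n) ℝ x) (EuclideanSpace.equiv (Fin m) ℝ y))

/-- The first component `ℝ^{n+m} → ℝ^n` of a covector. -/
def restFst {n m : ℕ} (ξ : EuclideanSpace ℝ (Fin (n + m))) : EuclideanSpace ℝ (Fin n) :=
  (EuclideanSpace.equiv (Fin n) ℝ).symm
    (fun i => EuclideanSpace.equiv (Fin (n + m)) ℝ ξ (Fin.castAdd m i))

/-- The second component `ℝ^{n+m} → ℝ^m` of a covector. -/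
def restSnd {n m : ℕ} (ξ : EuclideanSpace ℝ (Fin (n + m))) : EuclideanSpace ℝ (Fin m) :=
  (EuclideanSpace.equiv (Fin m) ℝ).symm
    (fun i => EuclideanSpace.equiv (Fin (n + m)) ℝ ξ (Fin.natAdd n i))

/-- The orthogonal direct sum `L ⊕ A ⊂ ℝ^{n+m}`, i.e. the subgroup `L × A`. -/
def prodSet {n m : ℕ} (L : Set (EuclideanSpace ℝ (Fin n))) (A : Set (EuclideanSpace ℝ (Fin m))) :
    Set (EuclideanSpace ℝ (Fin (n + m))) :=
  {z | ∃ x ∈ L, ∃ y ∈ A, z = pairE x y}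

/-- The overlattice `U_A = (L × A) ∪ ((L' \ L) × (A' \ A)) ⊂ ℝ^{n+m}`. -/
def overLattice {n m : ℕ} (L : Set (EuclideanSpace ℝ (Fin n)))
    (A : Set (EuclideanSpace ℝ (Fin m))) : Set (EuclideanSpace ℝ (Fin (n + m))) :=
  prodSet L A ∪ prodSet (dualSet L \ L) (dualSet A \ A)

/-- The standard lattice `I^n = ℤ^n ⊂ ℝ^n`. -/
def stdLattice (n : ℕ) : Set (EuclideanSpace ℝ (Fin n)) :=
  {x | ∀ i : Fin n, ∃ k : ℤ, x i = (k : ℝ)}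

/-- A lattice is diagonal if it admits a `ℤ`-basis with Gram matrix `diag(1, …, 1, 2)`,
i.e. it is isomorphic to `Δ_n = I^{n-1} ⊕ A_1`. -/
def IsDiagonal {n : ℕ} (Λ : Set (EuclideanSpace ℝ (Fin n))) : Prop :=
  ∃ b : Fin n → EuclideanSpace ℝ (Fin n),
    (∀ i, b i ∈ Λ) ∧ LinearIndependent ℤ b ∧
    (∀ x ∈ Λ, ∃ c : Fin n → ℤ, x = ∑ i, (c i : ℝ) • b i) ∧
    (∀ i j : Fin n, ⟪b i, b j⟫ =
      if i = j then (if (i : ℕ) = n - 1 then 2 else 1) else 0)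

/-- A lattice has an orthonormal `ℤ`-basis iff it is isomorphic to the standard lattice `I^n`. -/
def HasOrthonormalZBasis {n : ℕ} (Λ : Set (EuclideanSpace ℝ (Fin n))) : Prop :=
  ∃ b : Fin n → EuclideanSpace ℝ (Fin n),
    (∀ i, b i ∈ Λ) ∧ LinearIndependent ℤ b ∧
    (∀ x ∈ Λ, ∃ c : Fin n → ℤ, x = ∑ i, (c i : ℝ) • b i) ∧
    (∀ i j : Fin n, ⟪b i, b j⟫ = if i = j then 1 else 0)

abbrev E (N : ℕ) := EuclideanSpace ℝ (Fin N)

lemma inner_euc {N : ℕ} (x y : E N) : ⟪x, y⟫ = ∑ i, x i * y i := by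
  simp [PiLp.inner_apply, RCLike.inner_apply, conj_trivial]
  exact Finset.sum_congr rfl fun i _ => mul_comm _ _

-- parity lemma over ℤ
lemma parity_quad {N : ℕ} (c : Fin N → ℤ) (G : Fin N → Fin N → ℤ)
    (hsym : ∀ i j, G i j = G j i) :
    ∃ K : ℤ, (∑ j, c j * G j j) - (∑ i, ∑ j, c i * c j * G i j) = 2 * K := by
  have h2 : ((2 : ℕ) : ℤ) ∣ ((∑ j, c j * G j j) - (∑ i, ∑ j, c i * c j * G i j)) := by
    rw [← ZMod.intCast_zmod_eq_zero_iff_dvd]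
    push_cast
    set x : Fin N → ZMod 2 := fun i => ((c i : ℤ) : ZMod 2) with hx
    set g : Fin N → Fin N → ZMod 2 := fun i j => ((G i j : ℤ) : ZMod 2) with hg
    have key : (∑ i, ∑ j, x i * x j * g i j) = ∑ j, x j * g j j := by
      rw [← Finset.sum_product' (f := fun i j => x i * x j * g i j),
        ← Finset.diag_union_offDiag,
        Finset.sum_union (Finset.disjoint_diag_offDiag _), Finset.sum_diag]
      have hdiag : (∑ i, x (i, i).1 * x (i, i).2 * g (i, i).1 (i, i).2) = ∑ j, x j * g j j := by
        apply Finset.sum_congr rfl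
        intro i _
        have : x i * x i = x i := by
          have h2 : ∀ a : ZMod 2, a * a = a := by decide
          exact h2 _
        rw [show x (i,i).1 * x (i,i).2 * g (i,i).1 (i,i).2 = x i * x i * g i i from rfl, this]
      have hoff : (∑ p ∈ Finset.univ.offDiag, x p.1 * x p.2 * g p.1 p.2) = 0 := by
        apply Finset.sum_involution (g := fun p _ => Prod.swap p)
        · intro p _
          have : g p.2 p.1 = g p.1 p.2 := by simp only [hg, hsym p.2 p.1]
          show x p.1 * x p.2 * g p.1 p.2 + x p.2 * x p.1 * g p.2 p.1 = 0
          rw [this, mul_comm (x p.2) (x p.1), ← two_mul]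
          have : (2 : ZMod 2) = 0 := by decide
          rw [this, zero_mul]
        · intro p hp _
          simp only [Finset.mem_offDiag] at hp
          intro h
          have := congrArg Prod.fst h
          exact hp.2.2 this.symm
        · intro p hp
          simp only [Finset.mem_offDiag] at hp ⊢
          exact ⟨hp.2.1, hp.1, fun h => hp.2.2 h.symm⟩
        · intro p _; rfl
      rw [hdiag, hoff, add_zero]
    rw [key]; ring
  obtain ⟨K, hK⟩ := h2
  exact ⟨K, by push_cast at hK; linarith [hK]⟩

section GroupClosure
variable {N : ℕ} {Λ : Set (E N)}

lemma grp_zsmul (h0 : 0 ∈ Λ) (hadd : ∀ x ∈ Λ, ∀ y ∈ Λ, x + y ∈ Λ)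
    (hneg : ∀ x ∈ Λ, -x ∈ Λ) {x : E N} (hx : x ∈ Λ) (k : ℤ) : (k : ℝ) • x ∈ Λ := by
  let S : AddSubgroup (E N) :=
    { carrier := Λ, zero_mem' := h0, add_mem' := fun ha hb => hadd _ ha _ hb,
      neg_mem' := fun ha => hneg _ ha }
  have : (k : ℝ) • x = k • x := Int.cast_smul_eq_zsmul ℝ k x
  rw [this]
  exact AddSubgroup.zsmul_mem S hx k

lemma grp_sum (h0 : 0 ∈ Λ) (hadd : ∀ x ∈ Λ, ∀ y ∈ Λ, x + y ∈ Λ)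
    (f : Fin N → E N) (hf : ∀ i, f i ∈ Λ) : ∑ i, f i ∈ Λ :=
  Finset.sum_induction f (· ∈ Λ) (fun a b ha hb => hadd a ha b hb) h0 (fun i _ => hf i)

end GroupClosure

section LatticeKey
variable {N : ℕ} {Λ : Set (E N)}

lemma dual_add {x y : E N} (hx : x ∈ dualSet Λ) (hy : y ∈ dualSet Λ) :
    x + y ∈ dualSet Λ := by
  intro v hv
  obtain ⟨k1, h1⟩ := hx v hv
  obtain ⟨k2, h2⟩ := hy v hv
  exact ⟨k1 + k2, by rw [inner_add_left, h1, h2]; push_cast; ring⟩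

lemma lattice_key (hΛ : IsLattice Λ) :
    dualSet (dualSet Λ) ⊆ Λ ∧ (CharSet Λ).Nonempty := by
  obtain ⟨⟨h0, hadd, hneg⟩, ⟨b, hbmem, hbli, hbrep⟩, hspan, hint⟩ := hΛ
  -- b spans over ℝ
  have htop : ⊤ ≤ Submodule.span ℝ (Set.range b) := by
    rw [← hspan]
    apply Submodule.span_le.2
    intro x hx
    obtain ⟨c, rfl⟩ := hbrep x hx
    exact Submodule.sum_mem _ fun i _ =>
      Submodule.smul_mem _ _ (Submodule.subset_span (Set.mem_range_self i))
  have hcard : Fintype.card (Fin N) = Module.finrank ℝ (E N) := by simp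
  let B := basisOfTopLeSpanOfCardEqFinrank b htop hcard
  have hB : ⇑B = b := coe_basisOfTopLeSpanOfCardEqFinrank b htop hcard
  -- dual basis
  let d : Fin N → E N := fun i =>
    (InnerProductSpace.toDual ℝ (E N)).symm (B.coord i).toContinuousLinearMap
  have hd : ∀ i x, ⟪d i, x⟫ = B.repr x i := by
    intro i x
    rw [InnerProductSpace.toDual_symm_apply]
    rfl
  have hdb : ∀ i j, ⟪d i, b j⟫ = if j = i then 1 else 0 := by
    intro i j
    rw [hd, ← hB, Module.Basis.repr_self, Finsupp.single_apply]
  -- representation of any vector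
  have hrep : ∀ x : E N, x = ∑ i, ⟪d i, x⟫ • b i := by
    intro x
    conv_lhs => rw [← B.sum_repr x]
    refine Finset.sum_congr rfl fun i _ => ?_
    rw [hd, hB]
  -- d i lies in the dual
  have hdmem : ∀ i, d i ∈ dualSet Λ := by
    intro i v hv
    obtain ⟨c, rfl⟩ := hbrep v hv
    refine ⟨c i, ?_⟩
    rw [inner_sum]
    simp only [real_inner_smul_right, hdb, mul_ite, mul_one, mul_zero]
    simp
  constructor
  · -- double dual
    intro y hy
    have hcoef : ∀ i, ∃ k : ℤ, ⟪d i, y⟫ = (k : ℝ) := by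
      intro i
      obtain ⟨k, hk⟩ := hy (d i) (hdmem i)
      exact ⟨k, by rw [real_inner_comm]; exact hk⟩
    choose k hk using hcoef
    have : y = ∑ i, ((k i : ℝ)) • b i := by
      conv_lhs => rw [hrep y]
      exact Finset.sum_congr rfl fun i _ => by rw [hk]
    rw [this]
    exact grp_sum h0 hadd _ fun i => grp_zsmul h0 hadd hneg (hbmem i) (k i)
  · -- characteristic covector exists
    have hGram : ∀ i j, ∃ g : ℤ, ⟪b i, b j⟫ = (g : ℝ) := fun i j =>
      hint _ (hbmem i) _ (hbmem j)
    choose G hG using hGram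
    have hsym : ∀ i j, G i j = G j i := by
      intro i j
      have : ((G i j : ℤ) : ℝ) = ((G j i : ℤ) : ℝ) := by
        rw [← hG, ← hG, real_inner_comm]
      exact_mod_cast this
    refine ⟨∑ i, ((G i i : ℤ) : ℝ) • d i, ?_, ?_⟩
    · intro v hv
      obtain ⟨c, rfl⟩ := hbrep v hv
      refine ⟨∑ j, c j * G j j, ?_⟩
      rw [inner_sum]
      have : ∀ j, ⟪∑ i, ((G i i : ℤ) : ℝ) • d i, (c j : ℝ) • b j⟫ = (c j : ℝ) * (G j j : ℝ) := by
        intro j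
        rw [real_inner_smul_right, sum_inner]
        simp only [real_inner_smul_left, hdb, mul_ite, mul_one, mul_zero]
        rw [Finset.sum_ite_eq]
        simp
      rw [Finset.sum_congr rfl fun j _ => this j]
      push_cast
      ring
    · intro v hv
      obtain ⟨c, rfl⟩ := hbrep v hv
      have hv1 : ⟪∑ i, ((G i i : ℤ) : ℝ) • d i, ∑ i, (c i : ℝ) • b i⟫
          = ((∑ j, c j * G j j : ℤ) : ℝ) := by
        rw [inner_sum]
        have : ∀ j, ⟪∑ i, ((G i i : ℤ) : ℝ) • d i, (c j : ℝ) • b j⟫ = (c j : ℝ) * (G j j : ℝ) := by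
          intro j
          rw [real_inner_smul_right, sum_inner]
          simp only [real_inner_smul_left, hdb, mul_ite, mul_one, mul_zero]
          rw [Finset.sum_ite_eq]
          simp
        rw [Finset.sum_congr rfl fun j _ => this j]
        push_cast
        ring
      have hv2 : ⟪∑ i, (c i : ℝ) • b i, ∑ i, (c i : ℝ) • b i⟫
          = ((∑ i, ∑ j, c i * c j * G i j : ℤ) : ℝ) := by
        rw [sum_inner]
        have : ∀ i, ⟪(c i : ℝ) • b i, ∑ j, (c j : ℝ) • b j⟫
            = ∑ j, (c i : ℝ) * (c j : ℝ) * (G i j : ℝ) := by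
          intro i
          rw [real_inner_smul_left, inner_sum, Finset.mul_sum]
          refine Finset.sum_congr rfl fun j _ => ?_
          rw [real_inner_smul_right, hG]
          ring
        rw [Finset.sum_congr rfl fun i _ => this i]
        push_cast
        ring
      obtain ⟨K, hK⟩ := parity_quad c G hsym
      refine ⟨K, ?_⟩
      rw [hv1, hv2]
      have : ((∑ j, c j * G j j : ℤ) : ℝ) - ((∑ i, ∑ j, c i * c j * G i j : ℤ) : ℝ)
          = ((2 * K : ℤ) : ℝ) := by
        rw [← Int.cast_sub, hK]
      rw [this]
      push_cast
      ring

end LatticeKey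

section Bimod
variable {N : ℕ} {Λ : Set (E N)}

lemma char_add_two_dual {θ y : E N} (hθ : θ ∈ CharSet Λ) (hy : y ∈ dualSet Λ) :
    θ + (y + y) ∈ CharSet Λ := by
  constructor
  · intro v hv
    obtain ⟨k1, h1⟩ := hθ.1 v hv
    obtain ⟨k2, h2⟩ := hy v hv
    refine ⟨k1 + 2 * k2, ?_⟩
    rw [inner_add_left, inner_add_left, h1, h2]
    push_cast; ring
  · intro v hv
    obtain ⟨k1, h1⟩ := hθ.2 v hv
    obtain ⟨k2, h2⟩ := hy v hv
    refine ⟨k1 + k2, ?_⟩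
    have : ⟪θ + (y + y), v⟫ = ⟪θ, v⟫ + ⟪y, v⟫ + ⟪y, v⟫ := by
      rw [inner_add_left, inner_add_left]; ring
    rw [this, h2]
    push_cast
    linarith [h1]

lemma bimod_facts (h : IsBimodular Λ) :
    ∃ w ∈ dualSet Λ \ Λ, (∀ x ∈ dualSet Λ, x ∈ Λ ∨ x - w ∈ Λ) ∧
      (∃ a : ℤ, ⟪w, w⟫ = (a : ℝ) + 1 / 2) ∧
      (∀ θ ∈ CharSet Λ, ∃ p : ℤ, ⟪θ, w⟫ = (p : ℝ)) ∧
      (∀ s : ℤ, ∃ θ ∈ CharSet Λ, ∃ k : ℤ, ⟪θ, w⟫ = ((s + 2 * k : ℤ) : ℝ)) := by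
  obtain ⟨hlat, w, hw, hcos⟩ := h
  obtain ⟨hdd, θ₀, hθ₀⟩ := lattice_key hlat
  have h2w : w + w ∈ Λ := by
    rcases hcos (w + w) (dual_add hw.1 hw.1) with h | h
    · exact h
    · exact absurd (by simpa using h) hw.2
  obtain ⟨j, hj⟩ : ∃ j : ℤ, ⟪w, w⟫ + ⟪w, w⟫ = (j : ℝ) := by
    obtain ⟨j, hj⟩ := hw.1 (w + w) h2w
    exact ⟨j, by rw [← hj, inner_add_right]⟩
  -- j is odd
  have hodd : ∃ a : ℤ, j = 2 * a + 1 := by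
    rcases Int.even_or_odd j with ⟨a, ha⟩ | ⟨a, ha⟩
    · -- j = a + a even: contradiction
      exfalso
      have hww : ⟪w, w⟫ = (a : ℝ) := by
        have : (j : ℝ) = (a : ℝ) + (a : ℝ) := by rw [ha]; push_cast; ring
        linarith [hj, this]
      apply hw.2
      apply hdd
      intro x hx
      rcases hcos x hx with hmem | hmem
      · obtain ⟨k, hk⟩ := hw.1 x hmem
        exact ⟨k, hk⟩
      · obtain ⟨k, hk⟩ := hw.1 (x - w) hmem
        refine ⟨k + a, ?_⟩
        have : ⟪w, x - w⟫ = ⟪w, x⟫ - ⟪w, w⟫ := inner_sub_right w x w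
        push_cast
        rw [← hk, this, hww]
        ring
    · exact ⟨a, ha⟩
  obtain ⟨a, ha⟩ := hodd
  have hww : ⟪w, w⟫ = (a : ℝ) + 1 / 2 := by
    have : (j : ℝ) = 2 * (a : ℝ) + 1 := by rw [ha]; push_cast; ring
    linarith [hj, this]
  -- characteristic covectors pair integrally with w
  have hchar_int : ∀ θ ∈ CharSet Λ, ∃ p : ℤ, ⟪θ, w⟫ = (p : ℝ) := by
    intro θ hθ
    obtain ⟨k, hk⟩ := hθ.2 (w + w) h2w
    refine ⟨k + 2 * a + 1, ?_⟩
    have h1 : ⟪θ, w + w⟫ = ⟪θ, w⟫ + ⟪θ, w⟫ := inner_add_right θ w w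
    have h2 : ⟪w + w, w + w⟫ = 4 * ⟪w, w⟫ := by
      rw [inner_add_right, inner_add_left]; ring
    rw [h1, h2, hww] at hk
    push_cast
    linarith [hk]
  refine ⟨w, hw, hcos, ⟨a, hww⟩, hchar_int, ?_⟩
  intro s
  obtain ⟨p, hp⟩ := hchar_int θ₀ hθ₀
  rcases Int.even_or_odd (p - s) with ⟨r, hr⟩ | ⟨r, hr⟩
  · refine ⟨θ₀, hθ₀, r, ?_⟩
    rw [hp]
    have : p = s + 2 * r := by omega
    rw [this]
  · refine ⟨θ₀ + (w + w), char_add_two_dual hθ₀ hw.1, r + a + 1, ?_⟩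
    have h1 : ⟪θ₀ + (w + w), w⟫ = ⟪θ₀, w⟫ + 2 * ⟪w, w⟫ := by
      rw [inner_add_left, inner_add_left]; ring
    rw [h1, hp, hww]
    have : p + 2 * ((a : ℝ) + 1 / 2) = ((s + 2 * (r + a + 1) : ℤ) : ℝ) := by
      push_cast
      have : (p : ℝ) = (s : ℝ) + 2 * (r : ℝ) + 1 := by exact_mod_cast congrArg (Int.cast : ℤ → ℝ) (by omega : p = s + 2 * r + 1)
      linarith [this]
    linarith [this]
end Bimod

section Pair
variable {n m : ℕ}

lemma pairE_castAdd (x : E n) (y : E m) (i : Fin n) : pairE x y (Fin.castAdd m i) = x i := by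
  simp [pairE, Fin.append_left]

lemma pairE_natAdd (x : E n) (y : E m) (i : Fin m) : pairE x y (Fin.natAdd n i) = y i := by
  simp [pairE, Fin.append_right]

lemma restFst_pairE (x : E n) (y : E m) : restFst (pairE x y) = x := by
  ext i
  simp [restFst, pairE, Fin.append_left]

lemma restSnd_pairE (x : E n) (y : E m) : restSnd (pairE x y) = y := by
  ext i
  simp [restSnd, pairE, Fin.append_right]

lemma inner_pairE_pairE (a x : E n) (b y : E m) :
    ⟪pairE a b, pairE x y⟫ = ⟪a, x⟫ + ⟪b, y⟫ := by
  rw [inner_euc, inner_euc, inner_euc]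
  rw [Fin.sum_univ_add (f := fun i => pairE a b i * pairE x y i)]
  congr 1
  · exact Finset.sum_congr rfl fun i _ => by rw [pairE_castAdd, pairE_castAdd]
  · exact Finset.sum_congr rfl fun i _ => by rw [pairE_natAdd, pairE_natAdd]

end Pair

section Main
variable {n m : ℕ} {L : Set (E n)} {A : Set (E m)}

lemma pair_char {wL : E n} {wA : E m} {η : E n} {θ : E m}
    (hwL : wL ∈ dualSet L) (hcosL : ∀ x ∈ dualSet L, x ∈ L ∨ x - wL ∈ L)
    (hwA : wA ∈ dualSet A) (hcosA : ∀ y ∈ dualSet A, y ∈ A ∨ y - wA ∈ A)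
    (hη : η ∈ CharSet L) (hθ : θ ∈ CharSet A)
    (hpL : ∃ p : ℤ, ⟪η, wL⟫ = (p : ℝ)) (hpA : ∃ p : ℤ, ⟪θ, wA⟫ = (p : ℝ))
    (hsum : ∃ K : ℤ, ⟪η, wL⟫ + ⟪θ, wA⟫ - ⟪wL, wL⟫ - ⟪wA, wA⟫ = 2 * (K : ℝ)) :
    pairE η θ ∈ CharSet (overLattice L A) := by
  obtain ⟨p, hp⟩ := hpL
  obtain ⟨q, hq⟩ := hpA
  obtain ⟨K, hK⟩ := hsum
  constructor
  · rintro z (⟨x, hx, y, hy, rfl⟩ | ⟨x, hx, y, hy, rfl⟩)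
    · obtain ⟨k1, h1⟩ := hη.1 x hx
      obtain ⟨k2, h2⟩ := hθ.1 y hy
      refine ⟨k1 + k2, ?_⟩
      rw [inner_pairE_pairE, h1, h2]; push_cast; ring
    · have hl : x - wL ∈ L := (hcosL x hx.1).resolve_left hx.2
      have ha : y - wA ∈ A := (hcosA y hy.1).resolve_left hy.2
      obtain ⟨k1, h1⟩ := hη.1 _ hl
      obtain ⟨k2, h2⟩ := hθ.1 _ ha
      refine ⟨p + k1 + q + k2, ?_⟩
      rw [inner_pairE_pairE]
      have e1 : ⟪η, x - wL⟫ = ⟪η, x⟫ - ⟪η, wL⟫ := inner_sub_right η x wL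
      have e2 : ⟪θ, y - wA⟫ = ⟪θ, y⟫ - ⟪θ, wA⟫ := inner_sub_right θ y wA
      push_cast
      linarith [h1, h2, e1, e2, hp, hq]
  · rintro z (⟨x, hx, y, hy, rfl⟩ | ⟨x, hx, y, hy, rfl⟩)
    · obtain ⟨k1, h1⟩ := hη.2 x hx
      obtain ⟨k2, h2⟩ := hθ.2 y hy
      refine ⟨k1 + k2, ?_⟩
      rw [inner_pairE_pairE, inner_pairE_pairE]
      push_cast
      linarith [h1, h2]
    · have hl : x - wL ∈ L := (hcosL x hx.1).resolve_left hx.2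
      have ha : y - wA ∈ A := (hcosA y hy.1).resolve_left hy.2
      obtain ⟨k1, h1⟩ := hη.2 _ hl
      obtain ⟨k2, h2⟩ := hθ.2 _ ha
      obtain ⟨i1, hi1⟩ := hwL _ hl
      obtain ⟨i2, hi2⟩ := hwA _ ha
      refine ⟨K + k1 + k2 - i1 - i2, ?_⟩
      rw [inner_pairE_pairE, inner_pairE_pairE]
      have eL : ⟪x, x⟫ = ⟪wL, wL⟫ + 2 * ⟪wL, x - wL⟫ + ⟪x - wL, x - wL⟫ := by
        have hx' : wL + (x - wL) = x := by abel
        calc ⟪x, x⟫ = ⟪wL + (x - wL), wL + (x - wL)⟫ := by rw [hx']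
        _ = _ := real_inner_add_add_self _ _
      have eA : ⟪y, y⟫ = ⟪wA, wA⟫ + 2 * ⟪wA, y - wA⟫ + ⟪y - wA, y - wA⟫ := by
        have hy' : wA + (y - wA) = y := by abel
        calc ⟪y, y⟫ = ⟪wA + (y - wA), wA + (y - wA)⟫ := by rw [hy']
        _ = _ := real_inner_add_add_self _ _
      have e1 : ⟪η, x - wL⟫ = ⟪η, x⟫ - ⟪η, wL⟫ := inner_sub_right η x wL
      have e2 : ⟪θ, y - wA⟫ = ⟪θ, y⟫ - ⟪θ, wA⟫ := inner_sub_right θ y wA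
      push_cast
      linarith [h1, h2, hi1, hi2, hK, eL, eA, e1, e2]


end Main


/-- the restriction maps `Char(U_A) → Char(L)` and `Char(U_A) → Char(A)` are
surjective. -/
theorem stmt5 {n m : ℕ} (L : Set (EuclideanSpace ℝ (Fin n)))
    (A : Set (EuclideanSpace ℝ (Fin m))) (hL : IsBimodular L) (hA : IsBimodular A) :
    (∀ η ∈ CharSet L, ∃ ξ ∈ CharSet (overLattice L A), restFst ξ = η) ∧
    (∀ η ∈ CharSet A, ∃ ξ ∈ CharSet (overLattice L A), restSnd ξ = η) := by
  --

  obtain ⟨wL, hwL, hcosL, ⟨aL, haL⟩, hintL, hadjL⟩ := bimod_facts hL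
  obtain ⟨wA, hwA, hcosA, ⟨aA, haA⟩, hintA, hadjA⟩ := bimod_facts hA
  constructor
  · intro η hη
    obtain ⟨p, hp⟩ := hintL η hη
    obtain ⟨θ, hθ, k, hk⟩ := hadjA (aL + aA + 1 - p)
    refine ⟨pairE η θ, pair_char hwL.1 hcosL hwA.1 hcosA hη hθ ⟨p, hp⟩
      ⟨aL + aA + 1 - p + 2 * k, hk⟩ ⟨k, ?_⟩, restFst_pairE η θ⟩
    rw [hp, hk, haL, haA]; push_cast; ring
  · intro η hη
    obtain ⟨p, hp⟩ := hintA η hη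
    obtain ⟨θ, hθ, k, hk⟩ := hadjL (aL + aA + 1 - p)
    refine ⟨pairE θ η, pair_char hwL.1 hcosL hwA.1 hcosA hθ hη
      ⟨aL + aA + 1 - p + 2 * k, hk⟩ ⟨p, hp⟩ ⟨k, ?_⟩, restSnd_pairE θ η⟩
    rw [hk, hp, haL, haA]; push_cast; ring
end
end

section
/- Let 0 → C → D → E → F → G → 0 be an exact sequence of finitely generated abelian groups in which E is finite of square-free order, the torsion subgroups of C and G have the same (finite) cardinality, and the torsion subgroups of D and F have the same (finite) cardinality. Then the map D → E is surjective, the induced map C/torsion → D/torsion is injective with finite cokernel, and the order of that cokernel equals |E|. -/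
lemma aux_finite_torsion (M : Type*) [AddCommGroup M] [AddGroup.FG M] :
    Finite (Submodule.torsion ℤ M) := by
  have : Module.Finite ℤ M := Module.Finite.iff_addGroup_fg.mpr ‹_›
  exact Module.finite_of_fg_torsion _ (Submodule.torsion_isTorsion (R := ℤ) (M := M))

lemma aux_card_ker_mul_range {A B : Type*} [AddCommGroup A] [AddCommGroup B] (φ : A →+ B) :
    Nat.card A = Nat.card φ.ker * Nat.card φ.range := by
  rw [AddSubgroup.card_eq_card_quotient_mul_card_addSubgroup φ.ker,
    Nat.card_congr (QuotientAddGroup.quotientKerEquivRange φ).toEquiv, Nat.mul_comm]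

lemma aux_mem_torsion_int {M : Type*} [AddCommGroup M] (x : M) :
    x ∈ Submodule.torsion ℤ M ↔ ∃ n : ℤ, n ≠ 0 ∧ n • x = 0 := by
  rw [Submodule.mem_torsion_iff]
  constructor
  · rintro ⟨⟨n, hn⟩, h⟩
    exact ⟨n, mem_nonZeroDivisors_iff_ne_zero.mp hn, h⟩
  · rintro ⟨n, hn, h⟩
    exact ⟨⟨n, mem_nonZeroDivisors_of_ne_zero hn⟩, h⟩

lemma aux_mem_torsion_of_mem_finite {M : Type*} [AddCommGroup M] (H : AddSubgroup M)
    [Finite H] {x : M} (hx : x ∈ H) : x ∈ Submodule.torsion ℤ M := by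
  rw [aux_mem_torsion_int]
  have h0 : (Nat.card H) • (⟨x, hx⟩ : H) = 0 := card_nsmul_eq_zero'
  have h1 : (Nat.card H) • x = 0 := by
    calc (Nat.card H) • x = ((Nat.card H • (⟨x, hx⟩ : H) : H) : M) := rfl
    _ = ((0 : H) : M) := by rw [h0]
    _ = 0 := rfl
  exact ⟨(Nat.card H : ℤ), Int.natCast_ne_zero.mpr Nat.card_pos.ne', by
    rw [natCast_zsmul]; exact h1⟩

/-- let `0 → C → D → E → F → G → 0` be an exact sequence of finitely generated
abelian groups with `E` finite of square-free order, `|torsion C| = |torsion G|`, and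
`|torsion D| = |torsion F|`. Then `D → E` is surjective, and the induced map
`C/torsion → D/torsion` is injective with finite cokernel of order `|E|`. -/
theorem stmt13 {C D E F G : Type*}
    [AddCommGroup C] [AddCommGroup D] [AddCommGroup E] [AddCommGroup F] [AddCommGroup G]
    [AddGroup.FG C] [AddGroup.FG D] [AddGroup.FG E] [AddGroup.FG F] [AddGroup.FG G]
    (f₁ : C →+ D) (f₂ : D →+ E) (f₃ : E →+ F) (f₄ : F →+ G)
    (h₁ : Function.Injective f₁)
    (h₁₂ : f₁.range = f₂.ker) (h₂₃ : f₂.range = f₃.ker) (h₃₄ : f₃.range = f₄.ker)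
    (h₄ : Function.Surjective f₄)
    (hE : Finite E) (hEsq : Squarefree (Nat.card E))
    (hCG : Nat.card (Submodule.torsion ℤ C) = Nat.card (Submodule.torsion ℤ G))
    (hDF : Nat.card (Submodule.torsion ℤ D) = Nat.card (Submodule.torsion ℤ F)) :
    Function.Surjective f₂ ∧
    ∀ fbar : (C ⧸ Submodule.torsion ℤ C) →ₗ[ℤ] (D ⧸ Submodule.torsion ℤ D),
      (∀ c : C, fbar (Submodule.Quotient.mk c) = Submodule.Quotient.mk (f₁ c)) →
      Function.Injective fbar ∧
      Finite ((D ⧸ Submodule.torsion ℤ D) ⧸ LinearMap.range fbar) ∧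
      Nat.card ((D ⧸ Submodule.torsion ℤ D) ⧸ LinearMap.range fbar) = Nat.card E := by
  classical
  have finTC : Finite (Submodule.torsion ℤ C) := aux_finite_torsion C
  have finTD : Finite (Submodule.torsion ℤ D) := aux_finite_torsion D
  have finTF : Finite (Submodule.torsion ℤ F) := aux_finite_torsion F
  have finTG : Finite (Submodule.torsion ℤ G) := aux_finite_torsion G
  have finK4 : Finite f₄.ker := by
    have : Finite f₃.range := (Set.finite_range f₃).to_subtype
    rwa [h₃₄] at this
  have finR2 : Finite f₂.range := Subtype.finite
  -- |E| = q * k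
  have hEqk : Nat.card E = Nat.card f₄.ker * Nat.card f₂.range := by
    have h1 : Nat.card E = Nat.card (E ⧸ f₃.ker) * Nat.card f₃.ker :=
      AddSubgroup.card_eq_card_quotient_mul_card_addSubgroup f₃.ker
    have h2 : Nat.card (E ⧸ f₃.ker) = Nat.card f₄.ker := by
      rw [Nat.card_congr (QuotientAddGroup.quotientKerEquivRange f₃).toEquiv, h₃₄]
    have h3 : Nat.card f₃.ker = Nat.card f₂.range := by rw [← h₂₃]
    rw [h1, h2, h3]
  -- torsion transfer lemmas
  have hf₁tors : ∀ c : C, c ∈ Submodule.torsion ℤ C → f₁ c ∈ Submodule.torsion ℤ D := by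
    intro c hc
    rw [aux_mem_torsion_int] at hc ⊢
    obtain ⟨n, hn, h0⟩ := hc
    exact ⟨n, hn, by rw [← map_zsmul f₁, h0, map_zero]⟩
  have hf₁tors' : ∀ c : C, f₁ c ∈ Submodule.torsion ℤ D → c ∈ Submodule.torsion ℤ C := by
    intro c hc
    rw [aux_mem_torsion_int] at hc ⊢
    obtain ⟨n, hn, h0⟩ := hc
    exact ⟨n, hn, h₁ (by rw [map_zsmul, h0, map_zero])⟩
  have hf₄tors : ∀ x : F, x ∈ Submodule.torsion ℤ F → f₄ x ∈ Submodule.torsion ℤ G := by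
    intro x hx
    rw [aux_mem_torsion_int] at hx ⊢
    obtain ⟨n, hn, h0⟩ := hx
    exact ⟨n, hn, by rw [← map_zsmul f₄, h0, map_zero]⟩
  -- the map φD : torsion D →+ E
  set φD : (Submodule.torsion ℤ D) →+ E :=
    f₂.comp ((Submodule.torsion ℤ D).subtype.toAddMonoidHom) with hφD
  have hTD : Nat.card (Submodule.torsion ℤ D) = Nat.card φD.ker * Nat.card φD.range :=
    aux_card_ker_mul_range φD
  -- ker φD ≃ torsion C
  have hf₂f₁ : ∀ c : C, f₂ (f₁ c) = 0 := by
    intro c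
    have : f₁ c ∈ f₂.ker := h₁₂ ▸ AddMonoidHom.mem_range.mpr ⟨c, rfl⟩
    exact this
  let ψ : (Submodule.torsion ℤ C) →+ φD.ker :=
  { toFun := fun c => ⟨⟨f₁ c, hf₁tors c c.2⟩, by
      rw [AddMonoidHom.mem_ker]
      exact hf₂f₁ c⟩
    map_zero' := by ext; simp
    map_add' := fun a b => by ext; simp }
  have hψbij : Function.Bijective ψ := by
    constructor
    · intro a b hab
      have h3 : f₁ a = f₁ b := congrArg (fun x : φD.ker => ((x : (Submodule.torsion ℤ D)) : D)) hab
      exact Subtype.ext (h₁ h3)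
    · rintro ⟨⟨d, hd⟩, hk⟩
      rw [AddMonoidHom.mem_ker] at hk
      have hd2 : d ∈ f₂.ker := hk
      rw [← h₁₂] at hd2
      obtain ⟨c, hc⟩ := hd2
      refine ⟨⟨c, hf₁tors' c (hc ▸ hd)⟩, ?_⟩
      ext
      exact hc
  have hkerφD : Nat.card φD.ker = Nat.card (Submodule.torsion ℤ C) :=
    (Nat.card_congr (Equiv.ofBijective ψ hψbij)).symm
  have hrle : φD.range ≤ f₂.range := by
    rintro _ ⟨x, rfl⟩
    exact ⟨x, rfl⟩
  have hrdvd : Nat.card φD.range ∣ Nat.card f₂.range := AddSubgroup.card_dvd_of_le hrle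
  -- the map χ : torsion F →+ torsion G
  let χ : (Submodule.torsion ℤ F) →+ (Submodule.torsion ℤ G) :=
  { toFun := fun x => ⟨f₄ x, hf₄tors x x.2⟩
    map_zero' := by ext; simp
    map_add' := fun a b => by ext; simp }
  have hχsurj : Function.Surjective χ := by
    rintro ⟨g, hg⟩
    rw [aux_mem_torsion_int] at hg
    obtain ⟨n, hn, h0⟩ := hg
    obtain ⟨x, hx⟩ := h₄ g
    have hnx : n • x ∈ f₄.ker := by
      rw [AddMonoidHom.mem_ker, map_zsmul, hx, h0]
    have hxt : x ∈ Submodule.torsion ℤ F := by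
      have hmem := aux_mem_torsion_of_mem_finite f₄.ker hnx
      rw [aux_mem_torsion_int] at hmem ⊢
      obtain ⟨m, hm, h1⟩ := hmem
      exact ⟨m * n, mul_ne_zero hm hn, by rw [mul_smul]; exact h1⟩
    exact ⟨⟨x, hxt⟩, by ext; exact hx⟩
  have hTF : Nat.card (Submodule.torsion ℤ F) = Nat.card χ.ker * Nat.card χ.range :=
    aux_card_ker_mul_range χ
  have hrangeχ : Nat.card χ.range = Nat.card (Submodule.torsion ℤ G) := by
    rw [AddMonoidHom.range_eq_top.mpr hχsurj]
    exact Nat.card_congr AddSubgroup.topEquiv.toEquiv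
  -- ker χ ≃ ker f₄
  let ω : f₄.ker →+ χ.ker :=
  { toFun := fun y => ⟨⟨(y : F), aux_mem_torsion_of_mem_finite f₄.ker y.2⟩, by
      rw [AddMonoidHom.mem_ker]
      ext
      exact y.2⟩
    map_zero' := by ext; rfl
    map_add' := fun a b => by ext; rfl }
  have hωbij : Function.Bijective ω := by
    constructor
    · intro a b hab
      have h3 : (a : F) = (b : F) :=
        congrArg (fun x : χ.ker => ((x : (Submodule.torsion ℤ F)) : F)) hab
      exact Subtype.ext h3
    · rintro ⟨⟨x, hxt⟩, hk⟩
      rw [AddMonoidHom.mem_ker] at hk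
      have hx0 : f₄ x = 0 := congrArg Subtype.val hk
      refine ⟨⟨x, hx0⟩, ?_⟩
      ext
      rfl
  have hkerχ : Nat.card χ.ker = Nat.card f₄.ker :=
    (Nat.card_congr (Equiv.ofBijective ω hωbij)).symm
  -- arithmetic
  have hTCpos : Nat.card (Submodule.torsion ℤ C) ≠ 0 := Nat.card_pos.ne'
  have hmain : Nat.card (Submodule.torsion ℤ C) * Nat.card φD.range =
      Nat.card (Submodule.torsion ℤ C) * Nat.card f₄.ker := by
    rw [← hkerφD, ← hTD, hDF, hTF, hkerχ, hrangeχ, ← hCG, Nat.mul_comm, hkerφD]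
  have hrq : Nat.card φD.range = Nat.card f₄.ker :=
    Nat.eq_of_mul_eq_mul_left (Nat.pos_of_ne_zero hTCpos) hmain
  -- q = 1
  have hq1 : Nat.card f₄.ker = 1 := by
    obtain ⟨t, ht⟩ := hrq ▸ hrdvd
    refine Nat.isUnit_iff.mp (hEsq (Nat.card f₄.ker) ⟨t, ?_⟩)
    rw [hEqk, ht, mul_assoc]
  -- f₂ surjective
  have hkE : Nat.card f₂.range = Nat.card E := by
    rw [hEqk, hq1, one_mul]
  have hsurj₂ : Function.Surjective f₂ := by
    rw [← AddMonoidHom.range_eq_top]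
    exact AddSubgroup.eq_top_of_card_eq _ hkE
  -- torsion D ⊆ ker f₂
  have hr1 : Nat.card φD.range = 1 := hrq.trans hq1
  have hbot : φD.range = ⊥ := AddSubgroup.card_eq_one.mp hr1
  have hTDle : ∀ d : D, d ∈ Submodule.torsion ℤ D → f₂ d = 0 := by
    intro d hd
    have : φD ⟨d, hd⟩ ∈ φD.range := ⟨⟨d, hd⟩, rfl⟩
    rw [hbot, AddSubgroup.mem_bot] at this
    exact this
  refine ⟨hsurj₂, ?_⟩
  intro fbar hcomp
  -- injectivity
  have hinj : Function.Injective fbar := by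
    rw [← LinearMap.ker_eq_bot, eq_bot_iff]
    rintro x hx
    obtain ⟨c, rfl⟩ := Submodule.Quotient.mk_surjective _ x
    rw [LinearMap.mem_ker, hcomp, Submodule.Quotient.mk_eq_zero] at hx
    rw [Submodule.mem_bot, Submodule.Quotient.mk_eq_zero]
    exact hf₁tors' c hx
  -- the quotient map ψQ : D/T(D) →ₗ E
  set ψQ : (D ⧸ Submodule.torsion ℤ D) →ₗ[ℤ] E :=
    Submodule.liftQ (Submodule.torsion ℤ D) f₂.toIntLinearMap
      (fun x hx => by rw [LinearMap.mem_ker]; exact hTDle x hx) with hψQ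
  have hψap : ∀ d : D, ψQ (Submodule.Quotient.mk d) = f₂ d := fun d => rfl
  have hψsurj : Function.Surjective ψQ := by
    intro e
    obtain ⟨d, hd⟩ := hsurj₂ e
    exact ⟨Submodule.Quotient.mk d, by rw [hψap, hd]⟩
  have hkerψ : LinearMap.ker ψQ = LinearMap.range fbar := by
    ext x
    obtain ⟨d, rfl⟩ := Submodule.Quotient.mk_surjective _ x
    rw [LinearMap.mem_ker, LinearMap.mem_range, hψap]
    constructor
    · intro h0
      have hd : d ∈ f₂.ker := h0
      rw [← h₁₂] at hd
      obtain ⟨c, rfl⟩ := hd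
      exact ⟨Submodule.Quotient.mk c, hcomp c⟩
    · rintro ⟨y, hy⟩
      obtain ⟨c, rfl⟩ := Submodule.Quotient.mk_surjective _ y
      rw [hcomp c] at hy
      have : f₂ (f₁ c) = f₂ d := by
        rw [← hψap, ← hψap, hy]
      rw [← this]
      exact hf₂f₁ c
  let eqv : ((D ⧸ Submodule.torsion ℤ D) ⧸ LinearMap.range fbar) ≃ₗ[ℤ] E :=
    (Submodule.quotEquivOfEq _ _ hkerψ.symm).trans (ψQ.quotKerEquivOfSurjective hψsurj)
  exact ⟨hinj, Finite.of_equiv E eqv.symm.toEquiv, Nat.card_congr eqv.toEquiv⟩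
end
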